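/- The limit as K → ∞ of Ψ(K) = ∑_{ℓ₁=0}^{K−3} [(K−ℓ₁−1)(3ℓ₁²+ℓ₁−1)] / [2(K−ℓ₁)(4ℓ₁²−1)] · ∏_{ℓ₂=ℓ₁+1}^{K−2} ℓ₂/(2ℓ₂+1) equals 21/16 − (3/2)·ln 2. -/

import Mathlib

open Filter Finset

noncomputable def myTerm (K ℓ₁ : ℕ) : ℝ :=
  ((K : ℝ) - ℓ₁ - 1) * (3 * (ℓ₁ : ℝ) ^ 2 + ℓ₁ - 1) /
      (2 * ((K : ℝ) - ℓ₁) * (4 * (ℓ₁ : ℝ) ^ 2 - 1)) *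
    ∏ ℓ₂ ∈ Finset.Icc (ℓ₁ + 1) (K - 2), (ℓ₂ : ℝ) / (2 * ℓ₂ + 1)

noncomputable def myF (K j : ℕ) : ℝ := if 3 ≤ j ∧ j ≤ K then myTerm K (K - j) else 0

noncomputable def myG (j : ℕ) : ℝ :=
  if 3 ≤ j then (3 / 2) * ((1 / 2 : ℝ) ^ j - (1 / 2 : ℝ) ^ j / j) else 0

-- Reindexing lemma
lemma sum_eq_tsum (K : ℕ) (hK : 3 ≤ K) :
    (∑ ℓ₁ ∈ Finset.range (K - 3 + 1), myTerm K ℓ₁) = ∑' j, myF K j := by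
  rw [tsum_eq_sum (s := Finset.Icc 3 K) (f := fun j => myF K j)
    (by intro b hb; simp only [Finset.mem_Icc] at hb; simp only [myF]
        rw [if_neg]; omega)]
  refine Finset.sum_nbij' (fun ℓ₁ => K - ℓ₁) (fun j => K - j) ?_ ?_ ?_ ?_ ?_
  · intro a ha; simp only [Finset.mem_range] at ha; simp only [Finset.mem_Icc]; omega
  · intro a ha; simp only [Finset.mem_Icc] at ha; simp only [Finset.mem_range]; omega
  · intro a ha; simp only [Finset.mem_range] at ha; show K - (K - a) = a; omega
  · intro a ha; simp only [Finset.mem_Icc] at ha; show K - (K - a) = a; omega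
  · intro a ha; simp only [Finset.mem_range] at ha
    simp only [myF]
    rw [if_pos (by omega)]
    congr 1
    omega

lemma factor_tendsto : Tendsto (fun n : ℕ => (n : ℝ) / (2 * n + 1)) atTop (nhds (1 / 2)) := by
  have h : Tendsto (fun n : ℕ => 1 / (2 + 1 / (n : ℝ))) atTop (nhds (1 / 2)) := by
    have := (tendsto_const_nhds (x := (2 : ℝ)) (f := atTop)).add
      tendsto_one_div_atTop_nhds_zero_nat
    have h2 := (tendsto_const_nhds (x := (1 : ℝ)) (f := atTop)).div this (by norm_num)
    have h3 : Tendsto (fun n : ℕ => (1:ℝ) / (2 + 1 / (n : ℝ))) atTop (nhds (1/2)) := by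
      convert h2 using 1
      · funext n; simp [Pi.div_apply]
      · norm_num
    exact h3
  refine h.congr' ?_
  filter_upwards [eventually_ge_atTop 1] with n hn
  have hn0 : (n : ℝ) ≠ 0 := by
    have : (1:ℝ) ≤ n := by exact_mod_cast hn
    linarith
  have h2 : (2 : ℝ) * n + 1 ≠ 0 := by positivity
  field_simp

lemma prod_tendsto (j : ℕ) :
    Tendsto (fun m : ℕ => ∏ ℓ₂ ∈ Finset.Icc (m + 1) (m + j - 2), (ℓ₂ : ℝ) / (2 * ℓ₂ + 1))
      atTop (nhds ((1 / 2 : ℝ) ^ (j - 2))) := by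
  have key : ∀ m : ℕ, (∏ ℓ₂ ∈ Finset.Icc (m + 1) (m + j - 2), (ℓ₂ : ℝ) / (2 * ℓ₂ + 1)) =
      ∏ k ∈ Finset.range (j - 2), ((m + 1 + k : ℕ) : ℝ) / (2 * (m + 1 + k : ℕ) + 1) := by
    intro m
    rcases le_or_gt 3 j with hj | hj
    · rw [← Finset.Ico_add_one_right_eq_Icc, show m + j - 2 + 1 = m + j - 1 by omega,
        Finset.prod_Ico_eq_prod_range, show m + j - 1 - (m + 1) = j - 2 by omega]
    · rw [show j - 2 = 0 by omega, Finset.range_zero, Finset.prod_empty]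
      rw [Finset.Icc_eq_empty (by omega), Finset.prod_empty]
  simp only [key]
  have : ((1 / 2 : ℝ) ^ (j - 2)) = ∏ _k ∈ Finset.range (j - 2), (1 / 2 : ℝ) := by
    simp
  rw [this]
  refine tendsto_finset_prod _ (fun i _ => ?_)
  have hcomp : Tendsto (fun m : ℕ => m + 1 + i) atTop atTop := by
    simpa [add_assoc] using tendsto_add_atTop_nat (1 + i)
  exact factor_tendsto.comp hcomp

lemma coeff_tendsto (j : ℕ) (hj : 3 ≤ j) :
    Tendsto (fun m : ℕ => (((m + j : ℕ) : ℝ) - m - 1) * (3 * (m : ℝ) ^ 2 + m - 1) /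
        (2 * (((m + j : ℕ) : ℝ) - m) * (4 * (m : ℝ) ^ 2 - 1)))
      atTop (nhds (((j : ℝ) - 1) / (2 * j) * (3 / 4))) := by
  have h0 : Tendsto (fun m : ℕ => 1 / (m : ℝ) ^ 2) atTop (nhds 0) := by
    have := (tendsto_one_div_atTop_nhds_zero_nat : Tendsto (fun n : ℕ => 1 / (n : ℝ)) atTop (nhds 0)).mul tendsto_one_div_atTop_nhds_zero_nat
    simpa [one_div, ← mul_inv, ← sq] using this
  have h1 : Tendsto (fun m : ℕ => 3 + 1 / (m : ℝ) - 1 / (m : ℝ) ^ 2) atTop (nhds 3) := by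
    have := ((tendsto_const_nhds (x := (3 : ℝ)) (f := atTop)).add
      tendsto_one_div_atTop_nhds_zero_nat).sub h0
    simpa using this
  have h2 : Tendsto (fun m : ℕ => 4 - 1 / (m : ℝ) ^ 2) atTop (nhds 4) := by
    have := (tendsto_const_nhds (x := (4 : ℝ)) (f := atTop)).sub h0
    simpa using this
  have h3 := ((tendsto_const_nhds (x := ((j : ℝ) - 1) / (2 * j)) (f := atTop)).mul
    (h1.div h2 (by norm_num)))
  have h4 : ((j : ℝ) - 1) / (2 * j) * (3 / 4) = ((j : ℝ) - 1) / (2 * j) * (3 / 4) := rfl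
  refine h3.congr' ?_
  filter_upwards [eventually_ge_atTop 1] with m hm
  have hm1 : (1 : ℝ) ≤ (m : ℝ) := by exact_mod_cast hm
  have hm0 : (m : ℝ) ≠ 0 := by linarith
  have hj0 : (j : ℝ) ≠ 0 := by
    have : (3 : ℝ) ≤ (j : ℝ) := by exact_mod_cast hj
    linarith
  have hd1 : 4 * (m : ℝ) ^ 2 - 1 ≠ 0 := by nlinarith
  have hd2 : 4 - 1 / (m : ℝ) ^ 2 ≠ 0 := by
    have h5 : 1 / (m : ℝ) ^ 2 ≤ 1 := by
      rw [div_le_one (by positivity)]; nlinarith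
    intro h; rw [sub_eq_zero] at h; linarith [h.symm]
  simp only [Pi.div_apply]
  push_cast
  simp only [add_sub_cancel_left]
  field_simp

lemma term_tendsto (j : ℕ) (hj : 3 ≤ j) :
    Tendsto (fun m : ℕ => myTerm (m + j) m) atTop (nhds (myG j)) := by
  have h := (coeff_tendsto j hj).mul (prod_tendsto j)
  have hG : ((j : ℝ) - 1) / (2 * j) * (3 / 4) * (1 / 2 : ℝ) ^ (j - 2) = myG j := by
    obtain ⟨i, rfl⟩ : ∃ i, j = i + 3 := ⟨j - 3, by omega⟩
    simp only [myG, if_pos (by omega : 3 ≤ i + 3), show i + 3 - 2 = i + 1 by omega]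
    have hji : ((i : ℝ) + 3) ≠ 0 := by positivity
    push_cast
    field_simp
    ring
  rw [hG] at h
  exact h.congr (fun m => by simp only [myTerm])

lemma F_tendsto (j : ℕ) : Tendsto (fun K => myF K j) atTop (nhds (myG j)) := by
  rcases le_or_gt 3 j with hj | hj
  · have h := (term_tendsto j hj).comp (tendsto_sub_atTop_nat j)
    refine h.congr' ?_
    filter_upwards [eventually_ge_atTop j] with K hK
    simp only [Function.comp_apply, myF]
    rw [if_pos ⟨hj, hK⟩, show K - j + j = K from by omega]
  · have : ∀ K, myF K j = 0 := fun K => by simp only [myF]; rw [if_neg (by omega)]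
    simp only [this, myG, if_neg (by omega : ¬ 3 ≤ j)]
    exact tendsto_const_nhds

lemma coeff_bounds (j m : ℕ) (hj : 3 ≤ j) :
    0 ≤ ((j : ℝ) - 1) * (3 * (m : ℝ) ^ 2 + m - 1) / (2 * j * (4 * (m : ℝ) ^ 2 - 1)) ∧
    ((j : ℝ) - 1) * (3 * (m : ℝ) ^ 2 + m - 1) / (2 * j * (4 * (m : ℝ) ^ 2 - 1)) ≤ 1 / 2 := by
  have hj3 : (3 : ℝ) ≤ (j : ℝ) := by exact_mod_cast hj
  rcases Nat.eq_zero_or_pos m with h0 | h1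
  · subst h0
    have hj0 : (j : ℝ) ≠ 0 := by linarith
    have heq : ((j : ℝ) - 1) * (3 * ((0 : ℕ) : ℝ) ^ 2 + ((0 : ℕ) : ℝ) - 1) /
        (2 * j * (4 * ((0 : ℕ) : ℝ) ^ 2 - 1)) = ((j : ℝ) - 1) / (2 * j) := by
      push_cast
      rw [div_eq_div_iff (by intro h; apply hj0; nlinarith) (by positivity)]
      ring
    rw [heq]
    constructor
    · apply div_nonneg <;> linarith
    · rw [div_le_iff₀ (by linarith)]; linarith
  · have hm1 : (1 : ℝ) ≤ (m : ℝ) := by exact_mod_cast h1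
    have hnum : 0 ≤ ((j : ℝ) - 1) * (3 * (m : ℝ) ^ 2 + m - 1) := by nlinarith
    have hden : 0 < 2 * (j : ℝ) * (4 * (m : ℝ) ^ 2 - 1) := by nlinarith
    constructor
    · exact div_nonneg hnum hden.le
    · rw [div_le_iff₀ hden]; nlinarith

lemma F_bound (K : ℕ) (j : ℕ) : ‖myF K j‖ ≤ 2 * (1 / 2 : ℝ) ^ j := by
  simp only [myF]
  split_ifs with h
  · obtain ⟨hj3, hjK⟩ := h
    simp only [myTerm]
    have hcast : ((K - j : ℕ) : ℝ) = (K : ℝ) - j := by rw [Nat.cast_sub hjK]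
    have hKm : (K : ℝ) - ((K - j : ℕ) : ℝ) = (j : ℝ) := by rw [hcast]; ring
    rw [show (K : ℝ) - ((K - j : ℕ) : ℝ) - 1 = (j : ℝ) - 1 by rw [hcast]; ring, hKm]
    obtain ⟨hc0, hc1⟩ := coeff_bounds j (K - j) hj3
    have hpnn : 0 ≤ ∏ ℓ₂ ∈ Finset.Icc ((K - j) + 1) (K - 2), (ℓ₂ : ℝ) / (2 * ℓ₂ + 1) :=
      Finset.prod_nonneg fun i _ => by positivity
    have hcard : (Finset.Icc ((K - j) + 1) (K - 2)).card = j - 2 := by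
      rw [Nat.card_Icc]; omega
    have hple : (∏ ℓ₂ ∈ Finset.Icc ((K - j) + 1) (K - 2), (ℓ₂ : ℝ) / (2 * ℓ₂ + 1)) ≤
        (1 / 2 : ℝ) ^ (j - 2) := by
      rw [← hcard, ← Finset.prod_const]
      refine Finset.prod_le_prod (fun i _ => by positivity) (fun i _ => ?_)
      rw [div_le_iff₀ (by positivity)]
      have : (0 : ℝ) ≤ (i : ℝ) := Nat.cast_nonneg i
      linarith
    rw [Real.norm_eq_abs, abs_of_nonneg (mul_nonneg hc0 hpnn)]
    calc _ ≤ (1 / 2 : ℝ) * (1 / 2 : ℝ) ^ (j - 2) :=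
          mul_le_mul hc1 hple hpnn (by norm_num)
      _ = 2 * (1 / 2 : ℝ) ^ j := by
          obtain ⟨i, rfl⟩ : ∃ i, j = i + 2 := ⟨j - 2, by omega⟩
          rw [show i + 2 - 2 = i by omega]
          ring
  · simp

lemma hasSum_myG : HasSum myG (21 / 16 - (3 / 2) * Real.log 2) := by
  have hlog : HasSum (fun n : ℕ => (1 / 2 : ℝ) ^ (n + 1) / (n + 1)) (Real.log 2) := by
    have h := Real.hasSum_pow_div_log_of_abs_lt_one (x := (1 / 2 : ℝ)) (by rw [abs_of_pos] <;> norm_num)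
    have : -Real.log (1 - 1 / 2) = Real.log 2 := by
      rw [show (1 : ℝ) - 1 / 2 = 2⁻¹ by norm_num, Real.log_inv]; ring
    rwa [this] at h
  have hlog3 : HasSum (fun n : ℕ => (1 / 2 : ℝ) ^ (n + 3) / (n + 3)) (Real.log 2 - 5 / 8) := by
    have h := (hasSum_nat_add_iff' (f := fun n : ℕ => (1 / 2 : ℝ) ^ (n + 1) / (n + 1)) 2).mpr hlog
    have hsum : (∑ i ∈ Finset.range 2, (1 / 2 : ℝ) ^ (i + 1) / (i + 1)) = 5 / 8 := by
      simp [Finset.sum_range_succ]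
      norm_num
    rw [hsum] at h
    have heq : (fun n : ℕ => (1 / 2 : ℝ) ^ (n + 3) / (n + 3)) =
        fun n : ℕ => (1 / 2 : ℝ) ^ (n + 2 + 1) / (((n + 2 : ℕ) : ℝ) + 1) := by
      funext n; push_cast; ring_nf
    rw [heq]; exact h
  have hgeo : HasSum (fun n : ℕ => (1 / 2 : ℝ) ^ (n + 3)) (1 / 4) := by
    have h := (hasSum_nat_add_iff' (f := fun n : ℕ => (1 / 2 : ℝ) ^ n) 3).mpr
      (hasSum_geometric_of_lt_one (by norm_num) (by norm_num))
    have hsum : (∑ i ∈ Finset.range 3, (1 / 2 : ℝ) ^ i) = 7 / 4 := by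
      simp [Finset.sum_range_succ]; norm_num
    rw [hsum] at h
    have : ((1 : ℝ) - 1 / 2)⁻¹ - 7 / 4 = 1 / 4 := by norm_num
    rwa [this] at h
  have hshift : HasSum (fun n : ℕ => myG (n + 3))
      ((3 / 2) * (1 / 4 - (Real.log 2 - 5 / 8))) := by
    have h := (hgeo.sub hlog3).mul_left (3 / 2)
    refine h.congr_fun fun n => ?_
    simp only [myG, if_pos (by omega : 3 ≤ n + 3)]
    push_cast
    ring
  have h := (hasSum_nat_add_iff (f := myG) 3).mp hshift
  have hz : (∑ i ∈ Finset.range 3, myG i) = 0 := by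
    simp [Finset.sum_range_succ, myG]
  rw [hz, add_zero] at h
  rw [show (21 / 16 - (3 / 2) * Real.log 2 : ℝ) = (3 / 2) * (1 / 4 - (Real.log 2 - 5 / 8)) by ring]
  exact h

/-- `lim_{K→∞} Ψ(K) = 21/16 − (3/2)·ln 2`, where
`Ψ(K) = ∑_{ℓ₁=0}^{K−3} (K−ℓ₁−1)(3ℓ₁²+ℓ₁−1)/(2(K−ℓ₁)(4ℓ₁²−1)) · ∏_{ℓ₂=ℓ₁+1}^{K−2} ℓ₂/(2ℓ₂+1)`. -/
theorem stmt_9 :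
    Tendsto
      (fun K : ℕ => ∑ ℓ₁ ∈ Finset.range (K - 3 + 1),
        ((K : ℝ) - ℓ₁ - 1) * (3 * (ℓ₁ : ℝ) ^ 2 + ℓ₁ - 1) /
          (2 * ((K : ℝ) - ℓ₁) * (4 * (ℓ₁ : ℝ) ^ 2 - 1)) *
        ∏ ℓ₂ ∈ Finset.Icc (ℓ₁ + 1) (K - 2), (ℓ₂ : ℝ) / (2 * ℓ₂ + 1))
      atTop (nhds (21 / 16 - (3 / 2) * Real.log 2)) := by
  have hsummable : Summable (fun j : ℕ => 2 * (1 / 2 : ℝ) ^ j) :=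
    (summable_geometric_of_lt_one (by norm_num) (by norm_num)).mul_left 2
  have hmain := tendsto_tsum_of_dominated_convergence (f := fun K j => myF K j)
    (g := myG) (bound := fun j => 2 * (1 / 2 : ℝ) ^ j) hsummable F_tendsto
    (Filter.Eventually.of_forall fun K => F_bound K)
  rw [← hasSum_myG.tsum_eq]
  refine hmain.congr' ?_
  filter_upwards [eventually_ge_atTop 3] with K hK
  rw [← sum_eq_tsum K hK]
  rfl
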